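/- Let (E, ‖·‖) be an ultrametric Banach space over an ultrametric field K, r > 0, x ∈ E, and f : B_r(x) → E a map. Suppose A ∈ GL(E) with sup{‖f(z) − f(y) − A(z − y)‖/‖z − y‖ : y ≠ z ∈ B_r(x)} < ‖A⁻¹‖⁻¹. Then A⁻¹ ∘ f : B_r(x) → E is an isometry onto an open subset of E; in particular ‖A⁻¹f(z) − A⁻¹f(y)‖ = ‖z − y‖ for all y, z ∈ B_r(x). -/

import Mathlib

/-- Theorem 5.8 (a): in the ultrametric case, `A⁻¹ ∘ f` is an isometry of
the ball onto an open subset of `E`. -/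
theorem stmt14 {K E : Type*} [NontriviallyNormedField K] [CompleteSpace K]
    [IsUltrametricDist K]
    [NormedAddCommGroup E] [NormedSpace K E] [CompleteSpace E] [IsUltrametricDist E]
    (r : ℝ) (hr : 0 < r) (x : E) (f : E → E) (A : (E →L[K] E)ˣ) (σ : ℝ) (hσ0 : 0 ≤ σ)
    (hσ : ∀ y ∈ Metric.ball x r, ∀ z ∈ Metric.ball x r,
      ‖f z - f y - (A : E →L[K] E) (z - y)‖ ≤ σ * ‖z - y‖)
    (hσlt : σ < ‖((A⁻¹ : (E →L[K] E)ˣ) : E →L[K] E)‖⁻¹) :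
    (∀ y ∈ Metric.ball x r, ∀ z ∈ Metric.ball x r,
      ‖((A⁻¹ : (E →L[K] E)ˣ) : E →L[K] E) (f z) -
        ((A⁻¹ : (E →L[K] E)ˣ) : E →L[K] E) (f y)‖ = ‖z - y‖) ∧
    IsOpen ((fun v : E => ((A⁻¹ : (E →L[K] E)ˣ) : E →L[K] E) (f v)) '' Metric.ball x r) := by
  set B : E →L[K] E := ((A⁻¹ : (E →L[K] E)ˣ) : E →L[K] E) with hB
  have hBpos : 0 < ‖B‖ := by
    rcases (norm_nonneg B).lt_or_eq with h | h
    · exact h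
    · exfalso
      rw [← h] at hσlt
      simp only [inv_zero] at hσlt
      exact absurd hσlt (not_lt.2 hσ0)
  have hc1 : σ * ‖B‖ < 1 := by
    rw [← inv_mul_cancel₀ hBpos.ne']
    exact mul_lt_mul_of_pos_right hσlt hBpos
  -- key estimate for g = B ∘ f
  have key : ∀ y ∈ Metric.ball x r, ∀ z ∈ Metric.ball x r,
      ‖B (f z) - B (f y) - (z - y)‖ ≤ σ * ‖B‖ * ‖z - y‖ := by
    intro y hy z hz
    have h1 : B (f z) - B (f y) - (z - y) = B (f z - f y - (A : E →L[K] E) (z - y)) := by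
      have h1 : (B * (A : E →L[K] E)) = 1 := A.inv_mul
      have : B ((A : E →L[K] E) (z - y)) = z - y := by
        have := congrArg (fun (T : E →L[K] E) => T (z - y)) h1
        simpa [ContinuousLinearMap.mul_apply] using this
      rw [map_sub, map_sub, this]
    rw [h1]
    calc ‖B (f z - f y - (A : E →L[K] E) (z - y))‖ ≤ ‖B‖ * ‖f z - f y - (A : E →L[K] E) (z - y)‖ :=
          B.le_opNorm _
      _ ≤ ‖B‖ * (σ * ‖z - y‖) := by
          exact mul_le_mul_of_nonneg_left (hσ y hy z hz) (norm_nonneg _)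
      _ = σ * ‖B‖ * ‖z - y‖ := by ring
  constructor
  · -- isometry
    intro y hy z hz
    rcases eq_or_ne z y with rfl | hne
    · simp
    · have hzy : 0 < ‖z - y‖ := by
        rw [norm_pos_iff, sub_ne_zero]; exact hne
      have hlt : ‖B (f z) - B (f y) - (z - y)‖ < ‖z - y‖ := by
        calc ‖B (f z) - B (f y) - (z - y)‖ ≤ σ * ‖B‖ * ‖z - y‖ := key y hy z hz
          _ < 1 * ‖z - y‖ := mul_lt_mul_of_pos_right hc1 hzy
          _ = ‖z - y‖ := one_mul _
      have := IsUltrametricDist.norm_add_eq_max_of_norm_ne_norm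
        (x := B (f z) - B (f y) - (z - y)) (y := z - y) (by
          intro h; rw [h] at hlt; exact lt_irrefl _ hlt)
      rw [sub_add_cancel] at this
      rw [this, max_eq_right hlt.le]
  · -- openness
    set A' : E ≃L[K] E := ContinuousLinearEquiv.ofUnit A with hA'
    have hsymm : (A'.symm : E →L[K] E) = B := rfl
    have happrox : ApproximatesLinearOn f (A' : E →L[K] E) (Metric.ball x r) σ.toNNReal := by
      intro z hz y hy
      have := hσ y hy z hz
      rw [Real.coe_toNNReal σ hσ0]; exact this
    have hcN : σ.toNNReal < (A'.toNonlinearRightInverse).nnnorm⁻¹ := by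
      have hnn : (A'.toNonlinearRightInverse).nnnorm = ‖B‖₊ := by
        rw [← hsymm]; rfl
      rw [hnn, ← NNReal.coe_lt_coe]
      push_cast
      rw [Real.coe_toNNReal σ hσ0]
      exact hσlt
    have hopen : IsOpen (f '' Metric.ball x r) :=
      happrox.open_image A'.toNonlinearRightInverse Metric.isOpen_ball (Or.inr hcN)
    have himg : (fun v : E => B (f v)) '' Metric.ball x r
        = A'.symm '' (f '' Metric.ball x r) := by
      rw [Set.image_image]
      rfl
    rw [himg]
    exact A'.symm.isOpenMap _ hopen
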